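/- Let (X,d) be a compact metric space and let (X, f_{1,∞}) be a non-autonomous discrete system such that f_{1,∞} is feeble open, each f_n is surjective, (f_n) converges uniformly to a continuous map f : X → X, and the compositions (f_r^k) converge collectively to (f^k). Then f_{1,∞} is weakly mixing if and only if f is weakly mixing. -/

import Mathlib

open Set Filter

/-- `nds f i n` is the `n`-step composition `f_i^n = f (i+n-1) ∘ ⋯ ∘ f i`, with `nds f i 0 = id`. -/
def nds {X : Type*} (f : ℕ → X → X) (i : ℕ) : ℕ → X → X
  | 0 => id
  | n + 1 => f (i + n) ∘ nds f i n

section TopDefs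

variable {X : Type*} [TopologicalSpace X]

/-- The NDS `f_{1,∞}` is (topologically) transitive. -/
def NDSTransitive (f : ℕ → X → X) : Prop :=
  ∀ U V : Set X, IsOpen U → U.Nonempty → IsOpen V → V.Nonempty →
    ∃ n : ℕ, 0 < n ∧ (nds f 1 n '' U ∩ V).Nonempty

/-- The NDS `f_{1,∞}` is mixing. -/
def NDSMixing (f : ℕ → X → X) : Prop :=
  ∀ U V : Set X, IsOpen U → U.Nonempty → IsOpen V → V.Nonempty →
    ∃ N : ℕ, ∀ n : ℕ, N ≤ n → (nds f 1 n '' U ∩ V).Nonempty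

/-- The NDS `f_{1,∞}` is weakly mixing. -/
def NDSWeaklyMixing (f : ℕ → X → X) : Prop :=
  ∀ U₁ U₂ V₁ V₂ : Set X, IsOpen U₁ → U₁.Nonempty → IsOpen U₂ → U₂.Nonempty →
    IsOpen V₁ → V₁.Nonempty → IsOpen V₂ → V₂.Nonempty →
    ∃ n : ℕ, 0 < n ∧ (nds f 1 n '' U₁ ∩ V₁).Nonempty ∧ (nds f 1 n '' U₂ ∩ V₂).Nonempty

/-- The NDS `f_{1,∞}` is multi-transitive. -/
def NDSMultiTransitive (f : ℕ → X → X) : Prop :=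
  ∀ m : ℕ, 0 < m → ∀ U V : Fin m → Set X,
    (∀ j, IsOpen (U j)) → (∀ j, (U j).Nonempty) →
    (∀ j, IsOpen (V j)) → (∀ j, (V j).Nonempty) →
    ∃ l : ℕ, 0 < l ∧ ∀ j : Fin m, (nds f 1 (l * (j.1 + 1)) '' U j ∩ V j).Nonempty

/-- The NDS `f_{1,∞}` is totally transitive. -/
def NDSTotallyTransitive (f : ℕ → X → X) : Prop :=
  ∀ k : ℕ, 0 < k → ∀ U V : Set X, IsOpen U → U.Nonempty → IsOpen V → V.Nonempty →
    ∃ n : ℕ, 0 < n ∧ (nds f 1 (n * k) '' U ∩ V).Nonempty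

/-- The NDS `f_{1,∞}` is minimal: every orbit is dense. -/
def NDSMinimal (f : ℕ → X → X) : Prop :=
  ∀ x : X, Dense (Set.range fun n : ℕ => nds f 1 n x)

/-- The NDS `f_{1,∞}` is feeble open. -/
def FeebleOpen (f : ℕ → X → X) : Prop :=
  ∀ i : ℕ, 1 ≤ i → ∀ U : Set X, IsOpen U → U.Nonempty → (interior (f i '' U)).Nonempty

/-- A set of positive integers is syndetic (has bounded gaps). -/
def SyndeticSet (A : Set ℕ) : Prop :=
  ∃ M : ℕ, ∀ i : ℕ, 1 ≤ i → ∃ j ∈ A, i ≤ j ∧ j ≤ i + M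

/-- A set of positive integers is thick (contains arbitrarily long runs). -/
def ThickSet (A : Set ℕ) : Prop :=
  ∀ p : ℕ, ∃ n : ℕ, ∀ j : ℕ, n ≤ j → j ≤ n + p → j ∈ A

/-- The NDS `f_{1,∞}` is syndetically transitive. -/
def NDSSyndeticallyTransitive (f : ℕ → X → X) : Prop :=
  ∀ U V : Set X, IsOpen U → U.Nonempty → IsOpen V → V.Nonempty →
    SyndeticSet {n : ℕ | 0 < n ∧ (nds f 1 n '' U ∩ V).Nonempty}

/-- The NDS `f_{1,∞}` has dense periodic points. -/
def NDSDensePeriodicPoints (f : ℕ → X → X) : Prop :=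
  Dense {x : X | ∃ k : ℕ, 0 < k ∧ ∀ n : ℕ, 0 < n → nds f 1 (k * n) x = x}

/-- The NDS `f_{k,∞}` is strongly transitive. -/
def NDSStronglyTransitiveFrom (f : ℕ → X → X) (k : ℕ) : Prop :=
  ∀ U : Set X, IsOpen U → U.Nonempty →
    ∃ M : ℕ, 0 < M ∧ (⋃ i ∈ Set.Icc 1 M, nds f k i '' U) = Set.univ

/-- An autonomous map is transitive. -/
def MapTransitive {Y : Type*} [TopologicalSpace Y] (g : Y → Y) : Prop :=
  ∀ U V : Set Y, IsOpen U → U.Nonempty → IsOpen V → V.Nonempty →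
    ∃ n : ℕ, 0 < n ∧ (g^[n] '' U ∩ V).Nonempty

/-- An autonomous map is weakly mixing. -/
def MapWeaklyMixing {Y : Type*} [TopologicalSpace Y] (g : Y → Y) : Prop :=
  ∀ U₁ U₂ V₁ V₂ : Set Y, IsOpen U₁ → U₁.Nonempty → IsOpen U₂ → U₂.Nonempty →
    IsOpen V₁ → V₁.Nonempty → IsOpen V₂ → V₂.Nonempty →
    ∃ n : ℕ, 0 < n ∧ (g^[n] '' U₁ ∩ V₁).Nonempty ∧ (g^[n] '' U₂ ∩ V₂).Nonempty

/-- An autonomous map is totally transitive. -/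
def MapTotallyTransitive {Y : Type*} [TopologicalSpace Y] (g : Y → Y) : Prop :=
  ∀ k : ℕ, 0 < k → ∀ U V : Set Y, IsOpen U → U.Nonempty → IsOpen V → V.Nonempty →
    ∃ n : ℕ, 0 < n ∧ (g^[n * k] '' U ∩ V).Nonempty

/-- An autonomous map is syndetically transitive. -/
def MapSyndeticallyTransitive {Y : Type*} [TopologicalSpace Y] (g : Y → Y) : Prop :=
  ∀ U V : Set Y, IsOpen U → U.Nonempty → IsOpen V → V.Nonempty →
    SyndeticSet {n : ℕ | 0 < n ∧ (g^[n] '' U ∩ V).Nonempty}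

/-- An autonomous map is minimal. -/
def MapMinimal {Y : Type*} [TopologicalSpace Y] (g : Y → Y) : Prop :=
  ∀ x : Y, Dense (Set.range fun n : ℕ => g^[n] x)

end TopDefs

section MetricDefs

variable {X : Type*} [MetricSpace X]

/-- The compositions `(f_r^k)` converge collectively to `(f^k)` (w.r.t. the supremum metric). -/
def CollectivelyConverges (f : ℕ → X → X) (g : X → X) : Prop :=
  ∀ ε : ℝ, 0 < ε → ∃ r₀ : ℕ, ∀ r : ℕ, r₀ ≤ r → ∀ k : ℕ, 1 ≤ k → ∀ x : X,
    dist (nds f r k x) (g^[k] x) < ε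

/-- `N(U, δ)`: the times at which the NDS is `δ`-sensitive on `U`. -/
def SensSet (f : ℕ → X → X) (U : Set X) (δ : ℝ) : Set ℕ :=
  {n : ℕ | 0 < n ∧ ∃ x ∈ U, ∃ y ∈ U, δ < dist (nds f 1 n x) (nds f 1 n y)}

/-- The NDS `f_{1,∞}` is multi-sensitive. -/
def NDSMultiSensitive (f : ℕ → X → X) : Prop :=
  ∃ δ : ℝ, 0 < δ ∧ ∀ m : ℕ, 0 < m → ∀ U : Fin m → Set X,
    (∀ i, IsOpen (U i)) → (∀ i, (U i).Nonempty) → (⋂ i, SensSet f (U i) δ).Nonempty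

/-- The NDS `f_{1,∞}` is thickly sensitive. -/
def NDSThicklySensitive (f : ℕ → X → X) : Prop :=
  ∃ δ : ℝ, 0 < δ ∧ ∀ U : Set X, IsOpen U → U.Nonempty → ThickSet (SensSet f U δ)

/-- The NDS `f_{1,∞}` is syndetically sensitive. -/
def NDSSyndeticallySensitive (f : ℕ → X → X) : Prop :=
  ∃ δ : ℝ, 0 < δ ∧ ∀ U : Set X, IsOpen U → U.Nonempty → SyndeticSet (SensSet f U δ)

/-- The NDS `f_{1,∞}` is mildly mixing: its product with every transitive NDS on a compact
metric space is transitive. -/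
def NDSMildlyMixing (f : ℕ → X → X) : Prop :=
  ∀ (Y : Type*) [MetricSpace Y] [CompactSpace Y] (g : ℕ → Y → Y),
    (∀ n : ℕ, 1 ≤ n → Continuous (g n)) → NDSTransitive g →
    NDSTransitive (fun n (p : X × Y) => (f n p.1, g n p.2))

/-- The NDS `f_{1,∞}` is Li–Yorke chaotic. -/
def LiYorkeChaotic (f : ℕ → X → X) : Prop :=
  ∃ S : Set X, ¬S.Countable ∧ ∀ x ∈ S, ∀ y ∈ S, x ≠ y →
    Filter.liminf (fun n : ℕ => dist (nds f 1 n x) (nds f 1 n y)) Filter.atTop = 0 ∧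
    0 < Filter.limsup (fun n : ℕ => dist (nds f 1 n x) (nds f 1 n y)) Filter.atTop

end MetricDefs

section Helpers

variable {X : Type*} [MetricSpace X]

lemma nds_zero' (f : ℕ → X → X) (i : ℕ) (x : X) : nds f i 0 x = x := rfl

lemma nds_succ' (f : ℕ → X → X) (i n : ℕ) (x : X) :
    nds f i (n + 1) x = f (i + n) (nds f i n x) := rfl

lemma nds_add' (f : ℕ → X → X) (i a : ℕ) :
    ∀ (b : ℕ) (x : X), nds f i (a + b) x = nds f (i + a) b (nds f i a x) := by
  intro b
  induction b with
  | zero => intro x; rfl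
  | succ b ih =>
    intro x
    have h1 : nds f i (a + (b + 1)) x = f (i + (a + b)) (nds f i (a + b) x) := rfl
    rw [h1, ih x, nds_succ', Nat.add_assoc]

lemma nds_continuous' {f : ℕ → X → X} (hcont : ∀ n : ℕ, 1 ≤ n → Continuous (f n))
    {i : ℕ} (hi : 1 ≤ i) : ∀ n, Continuous (nds f i n) := by
  intro n
  induction n with
  | zero => exact continuous_id
  | succ n ih =>
    exact (hcont (i + n) (le_trans hi (Nat.le_add_right i n))).comp ih

lemma nds_surjective' {f : ℕ → X → X} (hsurj : ∀ n : ℕ, 1 ≤ n → Function.Surjective (f n))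
    {i : ℕ} (hi : 1 ≤ i) : ∀ n, Function.Surjective (nds f i n) := by
  intro n
  induction n with
  | zero => exact Function.surjective_id
  | succ n ih =>
    exact (hsurj (i + n) (le_trans hi (Nat.le_add_right i n))).comp ih

lemma feeble_interior' {f : ℕ → X → X} (hfo : FeebleOpen f) :
    ∀ (m : ℕ) (U : Set X), IsOpen U → U.Nonempty →
      (interior (nds f 1 m '' U)).Nonempty := by
  intro m
  induction m with
  | zero =>
    intro U hUo hUne
    have : nds f 1 0 '' U = U := Set.image_id U
    rw [this, hUo.interior_eq]
    exact hUne
  | succ m ih =>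
    intro U hUo hUne
    have him : nds f 1 (m + 1) '' U = f (1 + m) '' (nds f 1 m '' U) := by
      rw [← Set.image_comp]; rfl
    have h1 : (interior (f (1 + m) '' interior (nds f 1 m '' U))).Nonempty :=
      hfo (1 + m) (by omega) _ isOpen_interior (ih U hUo hUne)
    rw [him]
    exact h1.mono (interior_mono (Set.image_mono interior_subset))

lemma nds_modulus {f : ℕ → X → X} (hcont : ∀ n : ℕ, 1 ≤ n → Continuous (f n))
    (a : X) (N : ℕ) {η : ℝ} (hη : 0 < η) :
    ∃ θ > 0, ∀ n ≤ N, ∀ x, dist x a < θ → dist (nds f 1 n x) (nds f 1 n a) < η := by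
  induction N with
  | zero =>
    refine ⟨η, hη, ?_⟩
    intro n hn x hx
    interval_cases n
    simpa [nds_zero'] using hx
  | succ N ih =>
    obtain ⟨θ₁, hθ₁, h1⟩ := ih
    have hc : Continuous (nds f 1 (N + 1)) := nds_continuous' hcont le_rfl _
    obtain ⟨θ₂, hθ₂, h2⟩ := Metric.continuous_iff.mp hc a η hη
    refine ⟨min θ₁ θ₂, lt_min hθ₁ hθ₂, ?_⟩
    intro n hn x hx
    rcases Nat.lt_or_ge n (N + 1) with h | h
    · exact h1 n (by omega) x (lt_of_lt_of_le hx (min_le_left _ _))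
    · have hn' : n = N + 1 := by omega
      subst hn'
      exact h2 x (lt_of_lt_of_le hx (min_le_right _ _))

/-- In a nontrivial space, a weakly mixing NDS admits no finite nonempty open set. -/
lemma open_not_subset_finite {f : ℕ → X → X} (hwm : NDSWeaklyMixing f)
    (hnt : ∃ a b : X, a ≠ b) {B S : Set X} (hB : IsOpen B) (hBne : B.Nonempty)
    (hS : S.Finite) : ¬ B ⊆ S := by
  intro hsub
  have hBfin : B.Finite := hS.subset hsub
  obtain ⟨p, hp⟩ := hBne
  have hop : IsOpen ({p} : Set X) := by
    have h1 : ({p} : Set X) = B \ (B \ {p}) := by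
      ext z
      simp only [Set.mem_singleton_iff, Set.mem_diff, Set.mem_singleton_iff]
      constructor
      · rintro rfl; exact ⟨hp, fun h => (h.2 rfl).elim⟩
      · rintro ⟨_, h⟩
        by_contra hz
        exact h ⟨‹z ∈ B›, hz⟩
    rw [h1]
    exact hB.sdiff hBfin.diff.isClosed
  obtain ⟨q, hq⟩ : ∃ q : X, q ≠ p := by
    obtain ⟨a, b, hab⟩ := hnt
    rcases eq_or_ne a p with rfl | h
    · exact ⟨b, fun h => hab h.symm⟩
    · exact ⟨a, h⟩
  have hd : 0 < dist q p := dist_pos.mpr hq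
  obtain ⟨n, hn, ⟨y₁, hy₁⟩, ⟨y₂, hy₂⟩⟩ :=
    hwm {p} {p} {p} (Metric.ball q (dist q p)) hop ⟨p, rfl⟩ hop ⟨p, rfl⟩
      hop ⟨p, rfl⟩ Metric.isOpen_ball ⟨q, Metric.mem_ball_self hd⟩
  obtain ⟨⟨x₁, hx₁, rfl⟩, hy₁'⟩ := hy₁
  obtain ⟨⟨x₂, hx₂, rfl⟩, hy₂'⟩ := hy₂
  rw [Set.mem_singleton_iff] at hx₁ hx₂ hy₁'
  subst hx₁; subst hx₂
  rw [hy₁'] at hy₂'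
  rw [Metric.mem_ball, dist_comm] at hy₂'
  exact absurd hy₂' (lt_irrefl _)

/-- Separation lemma: for a weakly mixing NDS on a nontrivial space, any pair of
nonempty open sets can be shrunk so that there are no hits up to time `N`. -/
lemma separation_lemma {f : ℕ → X → X} (hcont : ∀ n : ℕ, 1 ≤ n → Continuous (f n))
    (hwm : NDSWeaklyMixing f) (hnt : ∃ a b : X, a ≠ b)
    {A B : Set X} (hA : IsOpen A) (hAne : A.Nonempty) (hB : IsOpen B) (hBne : B.Nonempty)
    (N : ℕ) :
    ∃ A' B' : Set X, IsOpen A' ∧ A'.Nonempty ∧ A' ⊆ A ∧ IsOpen B' ∧ B'.Nonempty ∧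
      B' ⊆ B ∧ ∀ n ≤ N, ∀ x ∈ A', nds f 1 n x ∉ B' := by
  obtain ⟨a, ha⟩ := hAne
  set S : Set X := (fun n => nds f 1 n a) '' Set.Iic N with hSdef
  have hSfin : S.Finite := (Set.finite_Iic N).image _
  obtain ⟨b, hbB, hbS⟩ :=
    Set.not_subset.mp (open_not_subset_finite hwm hnt hB hBne hSfin)
  have hbne : ∀ n ≤ N, b ≠ nds f 1 n a := by
    intro n hn h
    exact hbS ⟨n, hn, h.symm⟩
  obtain ⟨η₀, hη₀, hball⟩ := Metric.isOpen_iff.mp hB b hbB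
  set δ : ℝ := (Finset.range (N + 1)).inf' (by simp) (fun n => dist b (nds f 1 n a)) with hδdef
  have hδpos : 0 < δ := by
    rw [hδdef]
    apply Finset.lt_inf'_iff (by simp) |>.mpr
    intro n hn
    exact dist_pos.mpr (hbne n (by simpa using Nat.lt_succ_iff.mp (Finset.mem_range.mp hn)))
  have hδle : ∀ n ≤ N, δ ≤ dist b (nds f 1 n a) := by
    intro n hn
    exact Finset.inf'_le _ (Finset.mem_range.mpr (by omega))
  set γ : ℝ := min η₀ δ with hγdef
  have hγpos : 0 < γ := lt_min hη₀ hδpos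
  obtain ⟨θ, hθpos, hθ⟩ := nds_modulus hcont a N (half_pos hγpos)
  have hB'B : Metric.ball b (γ / 2) ⊆ B := by
    refine Set.Subset.trans (Metric.ball_subset_ball ?_) hball
    have : γ ≤ η₀ := min_le_left _ _
    linarith
  refine ⟨A ∩ Metric.ball a θ, Metric.ball b (γ / 2), hA.inter Metric.isOpen_ball,
    ⟨a, ha, Metric.mem_ball_self hθpos⟩, Set.inter_subset_left,
    Metric.isOpen_ball, ⟨b, Metric.mem_ball_self (half_pos hγpos)⟩, hB'B, ?_⟩
  intro n hn x hx hmem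
  have h1 : dist (nds f 1 n x) (nds f 1 n a) < γ / 2 := hθ n hn x hx.2
  have h2 : dist (nds f 1 n x) b < γ / 2 := hmem
  have h3 : dist b (nds f 1 n a) < γ :=
    calc dist b (nds f 1 n a) ≤ dist b (nds f 1 n x) + dist (nds f 1 n x) (nds f 1 n a) :=
          dist_triangle _ _ _
      _ < γ / 2 + γ / 2 := by rw [dist_comm] at h2; exact add_lt_add h2 h1
      _ = γ := by ring
  have h4 : γ ≤ dist b (nds f 1 n a) :=
    le_trans (min_le_right _ _) (hδle n hn)
  linarith

end Helpers

theorem weaklyMixing_iff_limit_weaklyMixing {X : Type*} [MetricSpace X] [CompactSpace X]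
    (f : ℕ → X → X) (F : X → X)
    (hcont : ∀ n : ℕ, 1 ≤ n → Continuous (f n))
    (hfo : FeebleOpen f)
    (hsurj : ∀ n : ℕ, 1 ≤ n → Function.Surjective (f n))
    (hF : Continuous F)
    (hunif : TendstoUniformly (fun n x => f n x) F Filter.atTop)
    (hcoll : CollectivelyConverges f F) :
    NDSWeaklyMixing f ↔ MapWeaklyMixing F := by
  constructor
  · -- forward direction
    intro hwm
    by_cases hnt : ∃ a b : X, a ≠ b
    · intro U₁ U₂ V₁ V₂ hU₁o hU₁ne hU₂o hU₂ne hV₁o hV₁ne hV₂o hV₂ne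
      obtain ⟨v₁, hv₁⟩ := hV₁ne
      obtain ⟨v₂, hv₂⟩ := hV₂ne
      obtain ⟨δ₁, hδ₁, hball₁⟩ := Metric.isOpen_iff.mp hV₁o v₁ hv₁
      obtain ⟨δ₂, hδ₂, hball₂⟩ := Metric.isOpen_iff.mp hV₂o v₂ hv₂
      set ε : ℝ := min δ₁ δ₂ / 2 with hεdef
      have hε : 0 < ε := by
        have := lt_min hδ₁ hδ₂
        positivity
      obtain ⟨r₀, hr₀⟩ := hcoll ε hε
      set m : ℕ := r₀ with hmdef
      have hgc : Continuous (nds f 1 m) := nds_continuous' hcont le_rfl m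
      have hgs : Function.Surjective (nds f 1 m) := nds_surjective' hsurj le_rfl m
      have hA₁o : IsOpen (nds f 1 m ⁻¹' U₁) := hU₁o.preimage hgc
      have hA₂o : IsOpen (nds f 1 m ⁻¹' U₂) := hU₂o.preimage hgc
      have hA₁ne : (nds f 1 m ⁻¹' U₁).Nonempty := by
        obtain ⟨u, hu⟩ := hU₁ne
        obtain ⟨x, hx⟩ := hgs u
        exact ⟨x, by simp [hx, hu]⟩
      have hA₂ne : (nds f 1 m ⁻¹' U₂).Nonempty := by
        obtain ⟨u, hu⟩ := hU₂ne
        obtain ⟨x, hx⟩ := hgs u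
        exact ⟨x, by simp [hx, hu]⟩
      obtain ⟨A', B', hA'o, hA'ne, hA'sub, hB'o, hB'ne, hB'sub, hsep⟩ :=
        separation_lemma hcont hwm hnt hA₁o hA₁ne Metric.isOpen_ball
          ⟨v₁, Metric.mem_ball_self hε⟩ m
      obtain ⟨n, hn, ⟨y₁, ⟨x₁, hx₁, rfl⟩, hy₁⟩, ⟨y₂, ⟨x₂, hx₂, rfl⟩, hy₂⟩⟩ :=
        hwm A' (nds f 1 m ⁻¹' U₂) B' (Metric.ball v₂ ε) hA'o hA'ne hA₂o hA₂ne
          hB'o hB'ne Metric.isOpen_ball ⟨v₂, Metric.mem_ball_self hε⟩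
      have hnm : m < n := by
        by_contra h
        exact hsep n (by omega) x₁ hx₁ hy₁
      set k : ℕ := n - m with hkdef
      have hk : 1 ≤ k := by omega
      have hmk : n = m + k := by omega
      have key : ∀ x : X, x ∈ nds f 1 m ⁻¹' U₁ ∪ nds f 1 m ⁻¹' U₂ →
          True := fun _ _ => trivial
      have hdist₁ : dist (nds f 1 n x₁) (F^[k] (nds f 1 m x₁)) < ε := by
        rw [hmk, nds_add' f 1 m k x₁]
        exact hr₀ (1 + m) (by omega) k hk (nds f 1 m x₁)
      have hdist₂ : dist (nds f 1 n x₂) (F^[k] (nds f 1 m x₂)) < ε := by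
        rw [hmk, nds_add' f 1 m k x₂]
        exact hr₀ (1 + m) (by omega) k hk (nds f 1 m x₂)
      have hin₁ : F^[k] (nds f 1 m x₁) ∈ V₁ := by
        apply hball₁
        have h1 : dist (nds f 1 n x₁) v₁ < ε := hB'sub hy₁
        rw [Metric.mem_ball]
        calc dist (F^[k] (nds f 1 m x₁)) v₁
            ≤ dist (F^[k] (nds f 1 m x₁)) (nds f 1 n x₁) + dist (nds f 1 n x₁) v₁ :=
              dist_triangle _ _ _
          _ < ε + ε := add_lt_add (by rw [dist_comm]; exact hdist₁) h1
          _ ≤ δ₁ := by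
              have : min δ₁ δ₂ ≤ δ₁ := min_le_left _ _
              rw [hεdef]; linarith
      have hin₂ : F^[k] (nds f 1 m x₂) ∈ V₂ := by
        apply hball₂
        have h2 : dist (nds f 1 n x₂) v₂ < ε := hy₂
        rw [Metric.mem_ball]
        calc dist (F^[k] (nds f 1 m x₂)) v₂
            ≤ dist (F^[k] (nds f 1 m x₂)) (nds f 1 n x₂) + dist (nds f 1 n x₂) v₂ :=
              dist_triangle _ _ _
          _ < ε + ε := add_lt_add (by rw [dist_comm]; exact hdist₂) h2
          _ ≤ δ₂ := by
              have : min δ₁ δ₂ ≤ δ₂ := min_le_right _ _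
              rw [hεdef]; linarith
      exact ⟨k, by omega, ⟨F^[k] (nds f 1 m x₁), ⟨nds f 1 m x₁, hA'sub hx₁, rfl⟩, hin₁⟩,
        ⟨F^[k] (nds f 1 m x₂), ⟨nds f 1 m x₂, hx₂, rfl⟩, hin₂⟩⟩
    · -- trivial space
      push_neg at hnt
      intro U₁ U₂ V₁ V₂ _ hU₁ne _ hU₂ne _ hV₁ne _ hV₂ne
      obtain ⟨u₁, hu₁⟩ := hU₁ne
      obtain ⟨u₂, hu₂⟩ := hU₂ne
      obtain ⟨w₁, hw₁⟩ := hV₁ne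
      obtain ⟨w₂, hw₂⟩ := hV₂ne
      refine ⟨1, one_pos, ⟨F^[1] u₁, ⟨u₁, hu₁, rfl⟩, ?_⟩, ⟨F^[1] u₂, ⟨u₂, hu₂, rfl⟩, ?_⟩⟩
      · rw [hnt (F^[1] u₁) w₁]; exact hw₁
      · rw [hnt (F^[1] u₂) w₂]; exact hw₂
  · -- reverse direction
    intro hFwm
    intro U₁ U₂ V₁ V₂ hU₁o hU₁ne hU₂o hU₂ne hV₁o hV₁ne hV₂o hV₂ne
    obtain ⟨v₁, hv₁⟩ := hV₁ne
    obtain ⟨v₂, hv₂⟩ := hV₂ne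
    obtain ⟨δ₁, hδ₁, hball₁⟩ := Metric.isOpen_iff.mp hV₁o v₁ hv₁
    obtain ⟨δ₂, hδ₂, hball₂⟩ := Metric.isOpen_iff.mp hV₂o v₂ hv₂
    set ε : ℝ := min δ₁ δ₂ / 2 with hεdef
    have hε : 0 < ε := by
      have := lt_min hδ₁ hδ₂
      positivity
    obtain ⟨r₀, hr₀⟩ := hcoll ε hε
    set r : ℕ := max r₀ 1 with hrdef
    set m : ℕ := r - 1 with hmdef
    have hr1 : 1 + m = r := by omega
    have hrr₀ : r₀ ≤ r := le_max_left _ _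
    have hW₁ : (interior (nds f 1 m '' U₁)).Nonempty := feeble_interior' hfo m U₁ hU₁o hU₁ne
    have hW₂ : (interior (nds f 1 m '' U₂)).Nonempty := feeble_interior' hfo m U₂ hU₂o hU₂ne
    obtain ⟨kk, hkk, ⟨z₁, ⟨w₁, hw₁, rfl⟩, hz₁⟩, ⟨z₂, ⟨w₂, hw₂, rfl⟩, hz₂⟩⟩ :=
      hFwm (interior (nds f 1 m '' U₁)) (interior (nds f 1 m '' U₂))
        (Metric.ball v₁ ε) (Metric.ball v₂ ε) isOpen_interior hW₁ isOpen_interior hW₂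
        Metric.isOpen_ball ⟨v₁, Metric.mem_ball_self hε⟩
        Metric.isOpen_ball ⟨v₂, Metric.mem_ball_self hε⟩
    obtain ⟨x₁, hx₁, hfx₁⟩ := interior_subset hw₁
    obtain ⟨x₂, hx₂, hfx₂⟩ := interior_subset hw₂
    refine ⟨m + kk, by omega, ?_, ?_⟩
    · refine ⟨nds f 1 (m + kk) x₁, ⟨x₁, hx₁, rfl⟩, hball₁ ?_⟩
      have hd : dist (nds f 1 (m + kk) x₁) (F^[kk] w₁) < ε := by
        rw [nds_add' f 1 m kk x₁, hfx₁, hr1]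
        exact hr₀ r hrr₀ kk (by omega) w₁
      rw [Metric.mem_ball]
      calc dist (nds f 1 (m + kk) x₁) v₁
          ≤ dist (nds f 1 (m + kk) x₁) (F^[kk] w₁) + dist (F^[kk] w₁) v₁ :=
            dist_triangle _ _ _
        _ < ε + ε := add_lt_add hd hz₁
        _ ≤ δ₁ := by
            have : min δ₁ δ₂ ≤ δ₁ := min_le_left _ _
            rw [hεdef]; linarith
    · refine ⟨nds f 1 (m + kk) x₂, ⟨x₂, hx₂, rfl⟩, hball₂ ?_⟩
      have hd : dist (nds f 1 (m + kk) x₂) (F^[kk] w₂) < ε := by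
        rw [nds_add' f 1 m kk x₂, hfx₂, hr1]
        exact hr₀ r hrr₀ kk (by omega) w₂
      rw [Metric.mem_ball]
      calc dist (nds f 1 (m + kk) x₂) v₂
          ≤ dist (nds f 1 (m + kk) x₂) (F^[kk] w₂) + dist (F^[kk] w₂) v₂ :=
            dist_triangle _ _ _
        _ < ε + ε := add_lt_add hd hz₂
        _ ≤ δ₂ := by
            have : min δ₁ δ₂ ≤ δ₂ := min_le_right _ _
            rw [hεdef]; linarith
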